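/- Gronwall-type decay: suppose φ : [0,∞) → [0,∞) is continuous and satisfies φ(r) ≤ C(1+r) + C r ∫₀^r φ(s)(1+s)^{-n/2-1} ds for all r ≥ 0, where n ≥ 2. Then there exists C' such that φ(r) ≤ C'(1+r) for all r ≥ 0. Consequently, if φ(r) = (1+r)^{n/2+1} F(r) then F(r) ≤ C'(1+r)^{-n/2}. -/

import Mathlib

open MeasureTheory

/-- Gronwall-type decay: if `φ ≥ 0` is continuous on `[0,∞)` and
`φ(r) ≤ C(1+r) + C r ∫₀^r φ(s)(1+s)^{-n/2-1} ds` with `n ≥ 3`, then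
`φ(r) ≤ C'(1+r)`; consequently if `φ(r) = (1+r)^{n/2+1}F(r)` then
`F(r) ≤ C'(1+r)^{-n/2}`. -/
theorem stmt11 (n : ℕ) (hn : 3 ≤ n) (C : ℝ) (hC : 0 < C) (φ : ℝ → ℝ)
    (hcont : ContinuousOn φ (Set.Ici 0)) (hpos : ∀ r ≥ (0 : ℝ), 0 ≤ φ r)
    (hineq : ∀ r ≥ (0 : ℝ),
      φ r ≤ C * (1 + r) + C * r * ∫ s in (0 : ℝ)..r, φ s * (1 + s) ^ (-(n : ℝ) / 2 - 1)) :
    ∃ C' : ℝ, (∀ r ≥ (0 : ℝ), φ r ≤ C' * (1 + r)) ∧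
      ∀ F : ℝ → ℝ, (∀ r, φ r = (1 + r) ^ ((n : ℝ) / 2 + 1) * F r) →
        ∀ r ≥ (0 : ℝ), F r ≤ C' * (1 + r) ^ (-(n : ℝ) / 2) := by
  have hn2 : (2 : ℝ) < (n : ℝ) := by
    have : (3 : ℝ) ≤ (n : ℝ) := by exact_mod_cast hn
    linarith
  -- globally continuous extensions
  set m : ℝ → ℝ := fun s => max s 0 with hm
  have hmcont : Continuous m := continuous_id.max continuous_const
  have hbase : ∀ s : ℝ, (0 : ℝ) < 1 + m s := fun s => by
    have := le_max_right s 0; simp only [hm]; linarith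
  set φt : ℝ → ℝ := fun s => φ (m s) with hφt
  have hφtcont : Continuous φt :=
    hcont.comp_continuous hmcont fun x => show (0 : ℝ) ≤ max x 0 from le_max_right x 0
  set w : ℝ → ℝ := fun s => (1 + m s) ^ (-(n : ℝ) / 2 - 1) with hw
  have hwcont : Continuous w :=
    (continuous_const.add hmcont).rpow_const fun x => Or.inl (ne_of_gt (hbase x))
  set g : ℝ → ℝ := fun s => C * (1 + m s) ^ (-(n : ℝ) / 2) with hg
  have hgcont : Continuous g :=
    continuous_const.mul
      ((continuous_const.add hmcont).rpow_const fun x => Or.inl (ne_of_gt (hbase x)))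
  set u : ℝ → ℝ := fun r => ∫ s in (0 : ℝ)..r, φt s * w s with hu
  set G : ℝ → ℝ := fun r => ∫ s in (0 : ℝ)..r, g s with hG
  have hfw : Continuous fun s => φt s * w s := hφtcont.mul hwcont
  have hud : ∀ x : ℝ, HasDerivAt u (φt x * w x) x := fun x =>
    (hfw.integral_hasStrictDerivAt 0 x).hasDerivAt
  have hGd : ∀ x : ℝ, HasDerivAt G (g x) x := fun x =>
    (hgcont.integral_hasStrictDerivAt 0 x).hasDerivAt
  have hwpos : ∀ s, 0 ≤ w s := fun s => Real.rpow_nonneg (le_of_lt (hbase s)) _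
  have hu0 : ∀ r ≥ (0 : ℝ), 0 ≤ u r := fun r hr =>
    intervalIntegral.integral_nonneg hr fun s _ =>
      mul_nonneg (hpos _ (le_max_right _ _)) (hwpos s)
  -- rewrite the hypothesis integral as u r
  have hkey : ∀ r ≥ (0 : ℝ), φ r ≤ C * (1 + r) * (1 + u r) := by
    intro r hr
    have heq : (∫ s in (0 : ℝ)..r, φ s * (1 + s) ^ (-(n : ℝ) / 2 - 1)) = u r := by
      apply intervalIntegral.integral_congr
      intro s hs
      rw [Set.uIcc_of_le hr] at hs
      have hs0 : (0 : ℝ) ≤ s := hs.1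
      simp only [hφt, hw, hm, max_eq_left hs0]
    have h1 := hineq r hr
    rw [heq] at h1
    have h2 : 0 ≤ u r := hu0 r hr
    nlinarith [mul_nonneg hC.le h2]
  -- the auxiliary function h
  set h : ℝ → ℝ := fun r => (1 + u r) * Real.exp (-G r) with hh
  have hhd : ∀ x : ℝ, HasDerivAt h
      (φt x * w x * Real.exp (-G x) + (1 + u x) * (Real.exp (-G x) * -g x)) x := by
    intro x
    exact ((hud x).const_add 1).mul ((hGd x).neg.exp)
  have hant : AntitoneOn h (Set.Ici (0 : ℝ)) := by
    apply antitoneOn_of_deriv_nonpos (convex_Ici 0)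
    · exact (Differentiable.continuous fun x => (hhd x).differentiableAt).continuousOn
    · exact fun x _ => ((hhd x).differentiableAt).differentiableWithinAt
    · intro x hx
      rw [interior_Ici] at hx
      rw [(hhd x).deriv]
      have hx0 : (0 : ℝ) ≤ x := le_of_lt hx
      have hmx : m x = x := max_eq_left hx0
      have hxb : (0 : ℝ) < 1 + x := by linarith
      have hkx := hkey x hx0
      have hux : 0 ≤ u x := hu0 x hx0
      -- φt x * w x ≤ g x * (1 + u x)
      have hstep : φt x * w x ≤ g x * (1 + u x) := by
        have hwx : w x = (1 + x) ^ (-(n : ℝ) / 2 - 1) := by simp [hw, hmx]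
        have hgx : g x = C * (1 + x) ^ (-(n : ℝ) / 2) := by simp [hg, hmx]
        have hφx : φt x = φ x := by simp [hφt, hmx]
        have hsplit : (1 + x) ^ (-(n : ℝ) / 2) =
            (1 + x) * (1 + x) ^ (-(n : ℝ) / 2 - 1) := by
          have h' := Real.rpow_add hxb 1 (-(n : ℝ) / 2 - 1)
          rw [Real.rpow_one] at h'
          rw [show (1 : ℝ) + (-(n : ℝ) / 2 - 1) = -(n : ℝ) / 2 by ring] at h'
          exact h'
        rw [hwx, hgx, hφx, hsplit]
        have hwnn : (0 : ℝ) ≤ (1 + x) ^ (-(n : ℝ) / 2 - 1) :=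
          Real.rpow_nonneg hxb.le _
        calc φ x * (1 + x) ^ (-(n : ℝ) / 2 - 1)
            ≤ C * (1 + x) * (1 + u x) * (1 + x) ^ (-(n : ℝ) / 2 - 1) :=
              mul_le_mul_of_nonneg_right hkx hwnn
          _ = C * ((1 + x) * (1 + x) ^ (-(n : ℝ) / 2 - 1)) * (1 + u x) := by ring
      have hexp : 0 < Real.exp (-G x) := Real.exp_pos _
      nlinarith [mul_le_mul_of_nonneg_right hstep hexp.le]
  -- h r ≤ h 0 = 1
  have hh0 : h 0 = 1 := by
    simp [hh, hu, hG, intervalIntegral.integral_same]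
  have hbound : ∀ r ≥ (0 : ℝ), 1 + u r ≤ Real.exp (G r) := by
    intro r hr
    have := hant (Set.self_mem_Ici) (Set.mem_Ici.mpr hr) hr
    rw [hh0] at this
    have hprod : Real.exp (-G r) * Real.exp (G r) = 1 := by
      rw [← Real.exp_add]; simp
    have h2 := mul_le_mul_of_nonneg_right this (Real.exp_pos (G r)).le
    calc 1 + u r = (1 + u r) * (Real.exp (-G r) * Real.exp (G r)) := by
          rw [hprod, mul_one]
      _ = (1 + u r) * Real.exp (-G r) * Real.exp (G r) := by ring
      _ ≤ 1 * Real.exp (G r) := h2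
      _ = Real.exp (G r) := one_mul _
  -- uniform bound on G
  set M : ℝ := C / ((n : ℝ) / 2 - 1) with hM
  have hGle : ∀ r ≥ (0 : ℝ), G r ≤ M := by
    intro r hr
    have heqg : G r = C * ∫ s in (0 : ℝ)..r, (1 + s) ^ (-(n : ℝ) / 2) := by
      rw [hG, ← intervalIntegral.integral_const_mul]
      apply intervalIntegral.integral_congr
      intro s hs
      rw [Set.uIcc_of_le hr] at hs
      simp [hg, hm, max_eq_left hs.1]
    have hsub : (∫ s in (0 : ℝ)..r, (1 + s) ^ (-(n : ℝ) / 2)) =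
        ∫ t in (1 : ℝ)..(1 + r), t ^ (-(n : ℝ) / 2) := by
      have h3 := intervalIntegral.integral_comp_add_left (a := (0 : ℝ)) (b := r)
        (fun t : ℝ => t ^ (-(n : ℝ) / 2)) 1
      simpa using h3
    have hne : -(n : ℝ) / 2 ≠ -1 := by
      intro hcon
      have : (n : ℝ) = 2 := by linarith [hcon]
      linarith
    have hnotin : (0 : ℝ) ∉ Set.uIcc (1 : ℝ) (1 + r) := by
      rw [Set.uIcc_of_le (by linarith)]
      intro hmem
      exact absurd hmem.1 (by norm_num)
    have hval := integral_rpow (a := 1) (b := 1 + r) (r := -(n : ℝ) / 2)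
      (Or.inr ⟨hne, hnotin⟩)
    rw [heqg, hsub, hval]
    have hq : -(n : ℝ) / 2 + 1 < 0 := by linarith
    have hA : (0 : ℝ) ≤ (1 + r) ^ (-(n : ℝ) / 2 + 1) :=
      Real.rpow_nonneg (by linarith) _
    rw [Real.one_rpow, hM]
    have hdpos : (0 : ℝ) < (n : ℝ) / 2 - 1 := by linarith
    have hrew : ((1 + r) ^ (-(n : ℝ) / 2 + 1) - 1) / (-(n : ℝ) / 2 + 1) =
        (1 - (1 + r) ^ (-(n : ℝ) / 2 + 1)) / ((n : ℝ) / 2 - 1) := by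
      rw [div_eq_div_iff hq.ne hdpos.ne']
      ring
    calc C * (((1 + r) ^ (-(n : ℝ) / 2 + 1) - 1) / (-(n : ℝ) / 2 + 1))
        = C * ((1 - (1 + r) ^ (-(n : ℝ) / 2 + 1)) / ((n : ℝ) / 2 - 1)) := by rw [hrew]
      _ ≤ C * (1 / ((n : ℝ) / 2 - 1)) := by
          apply mul_le_mul_of_nonneg_left _ hC.le
          apply (div_le_div_iff_of_pos_right hdpos).mpr
          linarith
      _ = C / ((n : ℝ) / 2 - 1) := by ring
  -- conclusion
  refine ⟨C * Real.exp M, ?_, ?_⟩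
  · intro r hr
    have h1u : 1 + u r ≤ Real.exp M :=
      (hbound r hr).trans (Real.exp_le_exp.mpr (hGle r hr))
    have hnn : (0 : ℝ) ≤ C * (1 + r) := by positivity
    calc φ r ≤ C * (1 + r) * (1 + u r) := hkey r hr
      _ ≤ C * (1 + r) * Real.exp M := mul_le_mul_of_nonneg_left h1u hnn
      _ = C * Real.exp M * (1 + r) := by ring
  · intro F hF r hr
    have hx : (0 : ℝ) < 1 + r := by linarith
    have hpow : (0 : ℝ) < (1 + r) ^ ((n : ℝ) / 2 + 1) := Real.rpow_pos_of_pos hx _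
    have h1u : 1 + u r ≤ Real.exp M :=
      (hbound r hr).trans (Real.exp_le_exp.mpr (hGle r hr))
    have hnn : (0 : ℝ) ≤ C * (1 + r) := by positivity
    have hφle : φ r ≤ C * Real.exp M * (1 + r) := by
      calc φ r ≤ C * (1 + r) * (1 + u r) := hkey r hr
        _ ≤ C * (1 + r) * Real.exp M := mul_le_mul_of_nonneg_left h1u hnn
        _ = C * Real.exp M * (1 + r) := by ring
    have hFr : F r = φ r / (1 + r) ^ ((n : ℝ) / 2 + 1) := by
      rw [hF r]; field_simp
    have hsplit : (1 + r) ^ (-(n : ℝ) / 2) =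
        (1 + r) / (1 + r) ^ ((n : ℝ) / 2 + 1) := by
      rw [show -(n : ℝ) / 2 = 1 - ((n : ℝ) / 2 + 1) by ring,
        Real.rpow_sub hx, Real.rpow_one]
    rw [hFr, hsplit, ← mul_div_assoc]
    exact (div_le_div_iff_of_pos_right hpow).mpr hφle
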